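/- arXiv:1201.4497 — 3 statements merged into one kernel-verified Lean document; each statement's English description precedes it below -/
import Mathlib

section
/- Let s : ℝ³ → ℝ³ be a screw with resultant s⃗ ≠ 0, let A ∈ ℝ³ be any point, and set Q := A + (s⃗ × s(A))/(s⃗ · s⃗). Then every point R on the line through Q with direction s⃗ satisfies s(R) = 𝓈, where 𝓈 := ((s(A) · s⃗)/(s⃗ · s⃗)) s⃗ is the vector invariant of s, and for every P ∈ ℝ³ one has s(P) = 𝓈 + s⃗ × (P − Q). -/
set_option autoImplicit false

open Matrix

/-- A screw is a vector field on `ℝ³` satisfying the constitutive equation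
with resultant `r`. -/
def IsScrewWith (s : (Fin 3 → ℝ) → (Fin 3 → ℝ)) (r : Fin 3 → ℝ) : Prop :=
  ∀ P Q : Fin 3 → ℝ, s P - s Q = r ⨯₃ (P - Q)

/-- Given a screw `s` with resultant `r ≠ 0` and any point `A`, setting
`Q := A + (r × s(A))/(r·r)`, every point on the line through `Q` with
direction `r` has screw field equal to the vector invariant
`𝓈 = ((s(A)·r)/(r·r)) r`, and `s(P) = 𝓈 + r × (P − Q)` for every `P`. -/
theorem screw_axis_exists (s : (Fin 3 → ℝ) → (Fin 3 → ℝ)) (r : Fin 3 → ℝ)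
    (hs : IsScrewWith s r) (hr : r ≠ 0) (A : Fin 3 → ℝ)
    (Q : Fin 3 → ℝ) (hQ : Q = A + (r ⬝ᵥ r)⁻¹ • (r ⨯₃ s A))
    (𝓈 : Fin 3 → ℝ) (h𝓈 : 𝓈 = ((s A ⬝ᵥ r) / (r ⬝ᵥ r)) • r) :
    (∀ t : ℝ, s (Q + t • r) = 𝓈) ∧
    (∀ P : Fin 3 → ℝ, s P = 𝓈 + r ⨯₃ (P - Q)) := by
  have hrr : r ⬝ᵥ r ≠ 0 := by
    intro h
    exact hr (by simpa [h] using (dotProduct_self_eq_zero (v := r)).mp h)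
  have hsQ : s Q = 𝓈 := by
    have h1 := hs Q A
    have h2 : s Q = s A + r ⨯₃ (Q - A) := by
      rw [← h1]; abel
    rw [h2, hQ, h𝓈]
    have hQA : A + (r ⬝ᵥ r)⁻¹ • (r ⨯₃ s A) - A = (r ⬝ᵥ r)⁻¹ • (r ⨯₃ s A) := by abel
    rw [hQA]
    apply smul_right_injective (Fin 3 → ℝ) hrr
    show (r ⬝ᵥ r) • (s A + r ⨯₃ ((r ⬝ᵥ r)⁻¹ • (r ⨯₃ s A))) = (r ⬝ᵥ r) • ((s A ⬝ᵥ r / r ⬝ᵥ r) • r)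
    rw [LinearMap.map_smul, smul_add, smul_smul, mul_inv_cancel₀ hrr, one_smul, smul_smul,
      mul_comm (r ⬝ᵥ r), div_mul_cancel₀ _ hrr]
    funext i
    fin_cases i <;>
      · simp [crossProduct, dotProduct, Fin.sum_univ_three]
        ring
  constructor
  · intro t
    have h1 := hs (Q + t • r) Q
    have h2 : s (Q + t • r) = s Q + r ⨯₃ (Q + t • r - Q) := by
      rw [← h1]; abel
    have h3 : Q + t • r - Q = t • r := by abel
    rw [h2, h3, hsQ]
    have : r ⨯₃ (t • r) = 0 := by
      rw [LinearMap.map_smul, cross_self, smul_zero]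
    rw [this, add_zero]
  · intro P
    have h1 := hs P Q
    rw [← hsQ]
    rw [← h1]; abel
end

section
/- Let s : ℝ³ → ℝ³ be a screw with resultant s⃗ ≠ 0 and vector invariant 𝓈, and let Q ∈ ℝ³ satisfy s(Q) = 𝓈. Then for every P ∈ ℝ³ one has ‖s(Q)‖ ≤ ‖s(P)‖; that is, the screw field attains its minimum norm precisely on the screw axis, where it equals the vector invariant. -/
set_option autoImplicit false

open Matrix

/-- The Euclidean norm of a vector of `ℝ³`. -/
noncomputable def enorm3 (v : Fin 3 → ℝ) : ℝ := Real.sqrt (v ⬝ᵥ v)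

/-- On the screw axis the screw field has minimal Euclidean norm: if
`s(Q)` equals the vector invariant `𝓈` then `‖s(Q)‖ ≤ ‖s(P)‖` for all `P`. -/
theorem screw_axis_min_norm (s : (Fin 3 → ℝ) → (Fin 3 → ℝ)) (r : Fin 3 → ℝ)
    (hs : IsScrewWith s r) (hr : r ≠ 0) (Q : Fin 3 → ℝ)
    (𝓈 : Fin 3 → ℝ) (h𝓈 : 𝓈 = ((s Q ⬝ᵥ r) / (r ⬝ᵥ r)) • r)
    (hQ : s Q = 𝓈) :
    ∀ P : Fin 3 → ℝ, enorm3 (s Q) ≤ enorm3 (s P) := by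
  intro P
  set c : Fin 3 → ℝ := r ⨯₃ (P - Q) with hc
  have hP : s P = s Q + c := by
    have h := hs P Q
    rw [hc, ← h]; abel
  have hdot : s Q ⬝ᵥ c = 0 := by
    rw [hQ, h𝓈, smul_dotProduct, hc, dot_self_cross, smul_zero]
  have hdot' : c ⬝ᵥ s Q = 0 := by rw [dotProduct_comm]; exact hdot
  have hexp : s P ⬝ᵥ s P = s Q ⬝ᵥ s Q + c ⬝ᵥ c := by
    rw [hP, add_dotProduct, dotProduct_add, dotProduct_add,
      hdot, hdot']
    ring
  have hcc : 0 ≤ c ⬝ᵥ c :=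
    Finset.sum_nonneg fun i _ => mul_self_nonneg (c i)
  unfold enorm3
  apply Real.sqrt_le_sqrt
  rw [hexp]; linarith
end

section
/- Let s₁, s₂, s₃ : ℝ³ → ℝ³ be screws with resultants s⃗₁, s⃗₂, s⃗₃. Then ⟨s₁, [s₃, s₂]⟩ + ⟨[s₃, s₁], s₂⟩ = 0, where for screws a, b with resultants a⃗, b⃗ the screw scalar product is ⟨a, b⟩ := a⃗ · b(P) + b⃗ · a(P) (independent of P), and the commutator of screws a, b is the screw [a, b](P) := b⃗ × a(P) − a⃗ × b(P) (a screw with resultant −(a⃗ × b⃗)). Moreover, for every P ∈ ℝ³ one has ⟨s₁, [s₃, s₂]⟩ = s₃(P) · (s⃗₁ × s⃗₂) + s₂(P) · (s⃗₃ × s⃗₁) + s₁(P) · (s⃗₂ × s⃗₃), an expression independent of P and invariant under cyclic permutation of (s₁, s₂, s₃). -/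
set_option autoImplicit false

open Matrix

/-- The commutator of two screws `a, b` (with resultants `a⃗, b⃗`):
the screw `P ↦ b⃗ × a(P) − a⃗ × b(P)`, whose resultant is `−(a⃗ × b⃗)`. -/
def screwComm (a b : (Fin 3 → ℝ) → (Fin 3 → ℝ)) (ra rb : Fin 3 → ℝ) :
    (Fin 3 → ℝ) → (Fin 3 → ℝ) :=
  fun P => rb ⨯₃ a P - ra ⨯₃ b P

/-- The screw scalar product of screws `a, b` with resultants `ra, rb`,
evaluated at the point `P` (it is in fact independent of `P`). -/
def screwProdAt (a b : (Fin 3 → ℝ) → (Fin 3 → ℝ)) (ra rb : Fin 3 → ℝ)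
    (P : Fin 3 → ℝ) : ℝ :=
  ra ⬝ᵥ b P + rb ⬝ᵥ a P

/-- Invariance of the screw scalar product:
`⟨s₁,[s₃,s₂]⟩ + ⟨[s₃,s₁],s₂⟩ = 0`; moreover `⟨s₁,[s₃,s₂]⟩` equals
`s₃(P)·(r₁×r₂) + s₂(P)·(r₃×r₁) + s₁(P)·(r₂×r₃)`, an expression independent
of `P` and invariant under cyclic permutation of `(s₁,s₂,s₃)`. -/
theorem screw_product_invariance (s₁ s₂ s₃ : (Fin 3 → ℝ) → (Fin 3 → ℝ))
    (r₁ r₂ r₃ : Fin 3 → ℝ)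
    (h₁ : IsScrewWith s₁ r₁) (h₂ : IsScrewWith s₂ r₂) (h₃ : IsScrewWith s₃ r₃) :
    ∀ P : Fin 3 → ℝ,
      -- ⟨s₁, [s₃,s₂]⟩ + ⟨[s₃,s₁], s₂⟩ = 0
      (screwProdAt s₁ (screwComm s₃ s₂ r₃ r₂) r₁ (-(r₃ ⨯₃ r₂)) P +
        screwProdAt (screwComm s₃ s₁ r₃ r₁) s₂ (-(r₃ ⨯₃ r₁)) r₂ P = 0) ∧
      -- explicit expression for ⟨s₁, [s₃,s₂]⟩
      (screwProdAt s₁ (screwComm s₃ s₂ r₃ r₂) r₁ (-(r₃ ⨯₃ r₂)) P =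
        s₃ P ⬝ᵥ (r₁ ⨯₃ r₂) + s₂ P ⬝ᵥ (r₃ ⨯₃ r₁) + s₁ P ⬝ᵥ (r₂ ⨯₃ r₃)) ∧
      -- independence of the point
      (∀ Q : Fin 3 → ℝ,
        s₃ P ⬝ᵥ (r₁ ⨯₃ r₂) + s₂ P ⬝ᵥ (r₃ ⨯₃ r₁) + s₁ P ⬝ᵥ (r₂ ⨯₃ r₃) =
        s₃ Q ⬝ᵥ (r₁ ⨯₃ r₂) + s₂ Q ⬝ᵥ (r₃ ⨯₃ r₁) + s₁ Q ⬝ᵥ (r₂ ⨯₃ r₃)) ∧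
      -- invariance under the cyclic permutation (s₁,s₂,s₃) → (s₂,s₃,s₁)
      (screwProdAt s₁ (screwComm s₃ s₂ r₃ r₂) r₁ (-(r₃ ⨯₃ r₂)) P =
        screwProdAt s₂ (screwComm s₁ s₃ r₁ r₃) r₂ (-(r₁ ⨯₃ r₃)) P) := by
  intro P
  refine ⟨?_, ?_, ?_, ?_⟩
  · simp [screwProdAt, screwComm, cross_apply, dotProduct, Fin.sum_univ_three]; ring
  · simp [screwProdAt, screwComm, cross_apply, dotProduct, Fin.sum_univ_three]; ring
  · intro Q
    rw [eq_add_of_sub_eq (h₁ P Q), eq_add_of_sub_eq (h₂ P Q), eq_add_of_sub_eq (h₃ P Q)]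
    simp [cross_apply, dotProduct, Fin.sum_univ_three]; ring
  · simp [screwProdAt, screwComm, cross_apply, dotProduct, Fin.sum_univ_three]; ring
end
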